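/- There exist infinitely many pairwise non-isomorphic finite-dimensional graded-commutative real algebras of the form ℝ[x₁,x₂,x₃]/(x₁²−λx₂x₃, x₂²−λx₁x₃, x₃²−λx₁x₂) for λ ∈ ℝ \ {1}: the algebras for distinct values λ, λ' outside a finite exceptional set are non-isomorphic as graded algebras. -/

import Mathlib

open MvPolynomial

/-- The ideal `(x₁²−λx₂x₃, x₂²−λx₁x₃, x₃²−λx₁x₂)` in `ℝ[x₁,x₂,x₃]`. -/
noncomputable def Jdl (lam : ℝ) : Ideal (MvPolynomial (Fin 3) ℝ) :=
  Ideal.span {(X 0 : MvPolynomial (Fin 3) ℝ) ^ 2 - C lam * (X 1 * X 2),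
    X 1 ^ 2 - C lam * (X 0 * X 2), X 2 ^ 2 - C lam * (X 0 * X 1)}

/-- The degree-2 part of the graded quotient algebra: the span of the images of
the generators `x₁, x₂, x₃` (each of cohomological degree 2). -/
noncomputable def degTwo (lam : ℝ) :
    Submodule ℝ (MvPolynomial (Fin 3) ℝ ⧸ Jdl lam) :=
  Submodule.span ℝ {Ideal.Quotient.mk (Jdl lam) (X 0),
    Ideal.Quotient.mk (Jdl lam) (X 1), Ideal.Quotient.mk (Jdl lam) (X 2)}

@[ext] structure Adl (lam : ℝ) where
  a : ℝ
  b0 : ℝ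
  b1 : ℝ
  b2 : ℝ
  c0 : ℝ
  c1 : ℝ
  c2 : ℝ
  d : ℝ

namespace Adl

variable {lam : ℝ}

instance : Zero (Adl lam) := ⟨⟨0,0,0,0,0,0,0,0⟩⟩
instance : One (Adl lam) := ⟨⟨1,0,0,0,0,0,0,0⟩⟩
instance : Add (Adl lam) := ⟨fun x y => ⟨x.a+y.a, x.b0+y.b0, x.b1+y.b1, x.b2+y.b2,
  x.c0+y.c0, x.c1+y.c1, x.c2+y.c2, x.d+y.d⟩⟩
instance : Neg (Adl lam) := ⟨fun x => ⟨-x.a, -x.b0, -x.b1, -x.b2, -x.c0, -x.c1, -x.c2, -x.d⟩⟩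
instance : Mul (Adl lam) := ⟨fun x y =>
  ⟨x.a*y.a,
   x.a*y.b0 + x.b0*y.a,
   x.a*y.b1 + x.b1*y.a,
   x.a*y.b2 + x.b2*y.a,
   x.a*y.c0 + x.c0*y.a + lam*(x.b0*y.b0) + x.b1*y.b2 + x.b2*y.b1,
   x.a*y.c1 + x.c1*y.a + lam*(x.b1*y.b1) + x.b0*y.b2 + x.b2*y.b0,
   x.a*y.c2 + x.c2*y.a + lam*(x.b2*y.b2) + x.b0*y.b1 + x.b1*y.b0,
   x.a*y.d + x.d*y.a + x.b0*y.c0 + x.b1*y.c1 + x.b2*y.c2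
     + x.c0*y.b0 + x.c1*y.b1 + x.c2*y.b2⟩⟩

@[simp] lemma zero_def : (0 : Adl lam) = ⟨0,0,0,0,0,0,0,0⟩ := rfl
@[simp] lemma one_def : (1 : Adl lam) = ⟨1,0,0,0,0,0,0,0⟩ := rfl
lemma add_def (x y : Adl lam) : x + y = ⟨x.a+y.a, x.b0+y.b0, x.b1+y.b1, x.b2+y.b2,
  x.c0+y.c0, x.c1+y.c1, x.c2+y.c2, x.d+y.d⟩ := rfl
lemma neg_def (x : Adl lam) : -x = ⟨-x.a, -x.b0, -x.b1, -x.b2, -x.c0, -x.c1, -x.c2, -x.d⟩ := rfl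
lemma mul_def (x y : Adl lam) : x * y =
  ⟨x.a*y.a,
   x.a*y.b0 + x.b0*y.a,
   x.a*y.b1 + x.b1*y.a,
   x.a*y.b2 + x.b2*y.a,
   x.a*y.c0 + x.c0*y.a + lam*(x.b0*y.b0) + x.b1*y.b2 + x.b2*y.b1,
   x.a*y.c1 + x.c1*y.a + lam*(x.b1*y.b1) + x.b0*y.b2 + x.b2*y.b0,
   x.a*y.c2 + x.c2*y.a + lam*(x.b2*y.b2) + x.b0*y.b1 + x.b1*y.b0,
   x.a*y.d + x.d*y.a + x.b0*y.c0 + x.b1*y.c1 + x.b2*y.c2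
     + x.c0*y.b0 + x.c1*y.b1 + x.c2*y.b2⟩ := rfl

instance : CommRing (Adl lam) where
  add_assoc x y z := by simp only [add_def]; ext <;> ring_nf
  zero_add x := by simp only [add_def, zero_def]; ext <;> simp
  add_zero x := by simp only [add_def, zero_def]; ext <;> simp
  add_comm x y := by simp only [add_def]; ext <;> ring_nf
  neg_add_cancel x := by simp only [add_def, neg_def, zero_def]; ext <;> simp
  mul_assoc x y z := by simp only [mul_def]; ext <;> ring_nf
  one_mul x := by simp only [mul_def, one_def]; ext <;> simp
  mul_one x := by simp only [mul_def, one_def]; ext <;> simp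
  left_distrib x y z := by simp only [mul_def, add_def]; ext <;> ring_nf
  right_distrib x y z := by simp only [mul_def, add_def]; ext <;> ring_nf
  mul_comm x y := by simp only [mul_def]; ext <;> ring_nf
  zero_mul x := by simp only [mul_def, zero_def]; ext <;> simp
  mul_zero x := by simp only [mul_def, zero_def]; ext <;> simp
  nsmul := nsmulRec
  zsmul := zsmulRec

noncomputable def algMap (lam : ℝ) : ℝ →+* Adl lam where
  toFun r := ⟨r,0,0,0,0,0,0,0⟩
  map_one' := rfl
  map_mul' r s := by simp only [mul_def]; ext <;> simp
  map_zero' := rfl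
  map_add' r s := by simp only [add_def]; ext <;> simp

noncomputable instance : Algebra ℝ (Adl lam) := (algMap lam).toAlgebra

@[simp] lemma algebraMap_apply (r : ℝ) :
    (algebraMap ℝ (Adl lam)) r = ⟨r,0,0,0,0,0,0,0⟩ := rfl

@[simp] lemma smul_def' (r : ℝ) (x : Adl lam) :
    r • x = ⟨r*x.a, r*x.b0, r*x.b1, r*x.b2, r*x.c0, r*x.c1, r*x.c2, r*x.d⟩ := by
  rw [Algebra.smul_def, algebraMap_apply, mul_def]; ext <;> simp

end Adl

namespace Adl
variable {lam : ℝ}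
noncomputable def gen (lam : ℝ) : Fin 3 → Adl lam :=
  ![⟨0,1,0,0,0,0,0,0⟩, ⟨0,0,1,0,0,0,0,0⟩, ⟨0,0,0,1,0,0,0,0⟩]

noncomputable def phi (lam : ℝ) : MvPolynomial (Fin 3) ℝ →ₐ[ℝ] Adl lam :=
  MvPolynomial.aeval (gen lam)

lemma ker_phi : ∀ p ∈ Jdl lam, phi lam p = 0 := by
  have h : Jdl lam ≤ RingHom.ker (phi lam).toRingHom := by
    rw [Jdl, Ideal.span_le]
    intro q hq
    simp only [Set.mem_insert_iff, Set.mem_singleton_iff] at hq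
    rcases hq with rfl | rfl | rfl <;>
    · simp only [SetLike.mem_coe, RingHom.mem_ker, AlgHom.toRingHom_eq_coe,
        RingHom.coe_coe, map_sub, map_mul, map_pow, phi, aeval_X, aeval_C]
      simp only [gen, Matrix.cons_val_zero, Matrix.cons_val_one, Matrix.head_cons,
        Matrix.cons_val_two, Matrix.tail_cons, algebraMap_apply]
      simp only [pow_two, mul_def]
      ext <;> ring_nf
  intro p hp
  exact h hp

noncomputable def psi (lam : ℝ) : (MvPolynomial (Fin 3) ℝ ⧸ Jdl lam) →ₐ[ℝ] Adl lam :=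
  Ideal.Quotient.liftₐ (Jdl lam) (phi lam) ker_phi

@[simp] lemma psi_mk (p : MvPolynomial (Fin 3) ℝ) :
    psi lam (Ideal.Quotient.mk (Jdl lam) p) = phi lam p := by
  simp [psi]; exact Ideal.Quotient.lift_mk _ _ _

end Adl


section Abs
variable {R : Type*} [CommRing R] [Algebra ℝ R]
variable (lam : ℝ) (x0 x1 x2 w : R)



variable (h0 : x0 ^ 2 = algebraMap ℝ R lam * (x1 * x2))
variable (h1 : x1 ^ 2 = algebraMap ℝ R lam * (x0 * x2))
variable (h2 : x2 ^ 2 = algebraMap ℝ R lam * (x0 * x1))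
variable (hw : w = x0 * x1 * x2)
variable (hl : lam ^ 3 ≠ 1)

omit [Algebra ℝ R] in
lemma abs_nothing : True := trivial

lemma abs_cancel {c : ℝ} (hc : c ≠ 0) {z : R} (hz : algebraMap ℝ R c * z = 0) : z = 0 := by
  have h := congrArg (fun t => algebraMap ℝ R c⁻¹ * t) hz
  simp only [mul_zero] at h
  rw [← mul_assoc, ← map_mul, inv_mul_cancel₀ hc, map_one, one_mul] at h
  exact h

include hl in
lemma abs_cancel13 {z : R} (hz : (1 - algebraMap ℝ R lam ^ 3) * z = 0) : z = 0 := by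
  have hne : (1 - lam ^ 3) ≠ 0 := sub_ne_zero.mpr (Ne.symm hl)
  refine abs_cancel hne ?_
  rw [map_sub, map_one, map_pow]
  exact hz

include h0 h1 h2 hl in
lemma abs_z01 : x0 ^ 2 * x1 = 0 := by
  refine abs_cancel13 lam hl ?_
  linear_combination x1 * h0 + algebraMap ℝ R lam * x2 * h1 + algebraMap ℝ R lam ^ 2 * x0 * h2

include h0 h1 h2 hl in
lemma abs_z02 : x0 ^ 2 * x2 = 0 := by
  refine abs_cancel13 lam hl ?_
  linear_combination x2 * h0 + algebraMap ℝ R lam * x1 * h2 + algebraMap ℝ R lam ^ 2 * x0 * h1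

include h0 h1 h2 hl in
lemma abs_z10 : x1 ^ 2 * x0 = 0 := by
  refine abs_cancel13 lam hl ?_
  linear_combination x0 * h1 + algebraMap ℝ R lam * x2 * h0 + algebraMap ℝ R lam ^ 2 * x1 * h2

include h0 h1 h2 hl in
lemma abs_z12 : x1 ^ 2 * x2 = 0 := by
  refine abs_cancel13 lam hl ?_
  linear_combination x2 * h1 + algebraMap ℝ R lam * x0 * h2 + algebraMap ℝ R lam ^ 2 * x1 * h0

include h0 h1 h2 hl in
lemma abs_z20 : x2 ^ 2 * x0 = 0 := by
  refine abs_cancel13 lam hl ?_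
  linear_combination x0 * h2 + algebraMap ℝ R lam * x1 * h0 + algebraMap ℝ R lam ^ 2 * x2 * h1

include h0 h1 h2 hl in
lemma abs_z21 : x2 ^ 2 * x1 = 0 := by
  refine abs_cancel13 lam hl ?_
  linear_combination x1 * h2 + algebraMap ℝ R lam * x0 * h1 + algebraMap ℝ R lam ^ 2 * x2 * h0

include h0 h1 h2 hw hl in
lemma abs_cube (A B C : R) :
    (A * x0 + B * x1 + C * x2) ^ 3
      = (algebraMap ℝ R lam * (A ^ 3 + B ^ 3 + C ^ 3) + 6 * (A * B * C)) * w := by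
  have hz01 := abs_z01 lam x0 x1 x2 h0 h1 h2 hl
  have hz02 := abs_z02 lam x0 x1 x2 h0 h1 h2 hl
  have hz10 := abs_z10 lam x0 x1 x2 h0 h1 h2 hl
  have hz12 := abs_z12 lam x0 x1 x2 h0 h1 h2 hl
  have hz20 := abs_z20 lam x0 x1 x2 h0 h1 h2 hl
  have hz21 := abs_z21 lam x0 x1 x2 h0 h1 h2 hl
  rw [hw]
  linear_combination (A ^ 3 * x0) * h0 + (B ^ 3 * x1) * h1 + (C ^ 3 * x2) * h2
    + (3 * A ^ 2 * B) * hz01 + (3 * A ^ 2 * C) * hz02 + (3 * A * B ^ 2) * hz10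
    + (3 * A * C ^ 2) * hz20 + (3 * B ^ 2 * C) * hz12 + (3 * B * C ^ 2) * hz21

include h0 h1 h2 hw hl in
lemma abs_mulq :
    ∀ z ∈ Submodule.span ℝ ({1, x0, x1, x2, x1 * x2, x0 * x2, x0 * x1, w} : Set R),
      ∀ i ∈ ({x0, x1, x2} : Set R),
        z * i ∈ Submodule.span ℝ ({1, x0, x1, x2, x1 * x2, x0 * x2, x0 * x1, w} : Set R) := by
  set S := Submodule.span ℝ ({1, x0, x1, x2, x1 * x2, x0 * x2, x0 * x1, w} : Set R) with hS
  have m1 : (1:R) ∈ S := Submodule.subset_span (by left; rfl)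
  have mx0 : x0 ∈ S := Submodule.subset_span (by right; left; rfl)
  have mx1 : x1 ∈ S := Submodule.subset_span (by right; right; left; rfl)
  have mx2 : x2 ∈ S := Submodule.subset_span (by right; right; right; left; rfl)
  have my0 : x1 * x2 ∈ S := Submodule.subset_span (by right; right; right; right; left; rfl)
  have my1 : x0 * x2 ∈ S :=
    Submodule.subset_span (by right; right; right; right; right; left; rfl)
  have my2 : x0 * x1 ∈ S :=
    Submodule.subset_span (by right; right; right; right; right; right; left; rfl)
  have mw : w ∈ S :=
    Submodule.subset_span (by right; right; right; right; right; right; right; rfl)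
  have hz01 := abs_z01 lam x0 x1 x2 h0 h1 h2 hl
  have hz02 := abs_z02 lam x0 x1 x2 h0 h1 h2 hl
  have hz10 := abs_z10 lam x0 x1 x2 h0 h1 h2 hl
  have hz12 := abs_z12 lam x0 x1 x2 h0 h1 h2 hl
  have hz20 := abs_z20 lam x0 x1 x2 h0 h1 h2 hl
  have hz21 := abs_z21 lam x0 x1 x2 h0 h1 h2 hl
  have hsm : ∀ z : R, algebraMap ℝ R lam * z = lam • z := fun z => (Algebra.smul_def lam z).symm
  intro z hz
  induction hz using Submodule.span_induction with
  | mem g hg =>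
    intro i hi
    have key : ∀ u v : R, u * v ∈ S → g * i = u * v → g * i ∈ S := fun u v h e => e ▸ h
    rcases hg with hg | hg | hg | hg | hg | hg | hg | hg <;>
      rcases hi with hi | hi | hi <;> rw [hg, hi]
    · rw [one_mul]; exact mx0
    · rw [one_mul]; exact mx1
    · rw [one_mul]; exact mx2
    · rw [← pow_two, h0, hsm]; exact Submodule.smul_mem _ _ my0
    · exact my2
    · exact my1
    · rw [mul_comm]; exact my2
    · rw [← pow_two, h1, hsm]; exact Submodule.smul_mem _ _ my1
    · exact my0
    · rw [mul_comm]; exact my1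
    · rw [mul_comm]; exact my0
    · rw [← pow_two, h2, hsm]; exact Submodule.smul_mem _ _ my2
    · have e : x1 * x2 * x0 = w := by rw [hw]; ring
      rw [e]; exact mw
    · have e : x1 * x2 * x1 = x1 ^ 2 * x2 := by ring
      rw [e, hz12]; exact Submodule.zero_mem _
    · have e : x1 * x2 * x2 = x2 ^ 2 * x1 := by ring
      rw [e, hz21]; exact Submodule.zero_mem _
    · have e : x0 * x2 * x0 = x0 ^ 2 * x2 := by ring
      rw [e, hz02]; exact Submodule.zero_mem _
    · have e : x0 * x2 * x1 = w := by rw [hw]; ring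
      rw [e]; exact mw
    · have e : x0 * x2 * x2 = x2 ^ 2 * x0 := by ring
      rw [e, hz20]; exact Submodule.zero_mem _
    · have e : x0 * x1 * x0 = x0 ^ 2 * x1 := by ring
      rw [e, hz01]; exact Submodule.zero_mem _
    · have e : x0 * x1 * x1 = x1 ^ 2 * x0 := by ring
      rw [e, hz10]; exact Submodule.zero_mem _
    · have e : x0 * x1 * x2 = w := hw.symm
      rw [e]; exact mw
    · have e : w * x0 = x0 ^ 2 * x1 * x2 := by rw [hw]; ring
      rw [e, hz01, zero_mul]; exact Submodule.zero_mem _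
    · have e : w * x1 = x1 ^ 2 * x0 * x2 := by rw [hw]; ring
      rw [e, hz10, zero_mul]; exact Submodule.zero_mem _
    · have e : w * x2 = x2 ^ 2 * x0 * x1 := by rw [hw]; ring
      rw [e, hz20, zero_mul]; exact Submodule.zero_mem _
  | zero => intro i _; rw [zero_mul]; exact Submodule.zero_mem _
  | add a b _ _ ha hb => intro i hi; rw [add_mul]; exact Submodule.add_mem _ (ha i hi) (hb i hi)
  | smul r a _ ha => intro i hi; rw [smul_mul_assoc]; exact Submodule.smul_mem _ _ (ha i hi)

end Abs

section Quot
variable (lam : ℝ)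

local notation "Q" => MvPolynomial (Fin 3) ℝ ⧸ Jdl lam

noncomputable def qq (i : Fin 3) : Q := Ideal.Quotient.mk (Jdl lam) (X i)
noncomputable def ww : Q := Ideal.Quotient.mk (Jdl lam) (X 0 * X 1 * X 2)
noncomputable def al (r : ℝ) : Q := algebraMap ℝ _ r

lemma rel0 : qq lam 0 ^ 2 = al lam lam * (qq lam 1 * qq lam 2) := by
  have : Ideal.Quotient.mk (Jdl lam) ((X 0:MvPolynomial (Fin 3) ℝ) ^ 2 - C lam * (X 1 * X 2)) = 0 := by
    rw [Ideal.Quotient.eq_zero_iff_mem, Jdl]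
    exact Ideal.subset_span (by simp)
  have h := sub_eq_zero.mp (by simpa [map_sub, map_mul, map_pow] using this)
  simp only [qq, al]; exact h

lemma rel1 : qq lam 1 ^ 2 = al lam lam * (qq lam 0 * qq lam 2) := by
  have : Ideal.Quotient.mk (Jdl lam) ((X 1:MvPolynomial (Fin 3) ℝ) ^ 2 - C lam * (X 0 * X 2)) = 0 := by
    rw [Ideal.Quotient.eq_zero_iff_mem, Jdl]
    exact Ideal.subset_span (by simp)
  have h := sub_eq_zero.mp (by simpa [map_sub, map_mul, map_pow] using this)
  simp only [qq, al]; exact h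

lemma rel2 : qq lam 2 ^ 2 = al lam lam * (qq lam 0 * qq lam 1) := by
  have : Ideal.Quotient.mk (Jdl lam) ((X 2:MvPolynomial (Fin 3) ℝ) ^ 2 - C lam * (X 0 * X 1)) = 0 := by
    rw [Ideal.Quotient.eq_zero_iff_mem, Jdl]
    exact Ideal.subset_span (by simp)
  have h := sub_eq_zero.mp (by simpa [map_sub, map_mul, map_pow] using this)
  simp only [qq, al]; exact h


omit lam in
lemma al_mul_al {lam : ℝ} (r s : ℝ) : al lam r * al lam s = al lam (r * s) := by
  simp [al, ← map_mul]

omit lam in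
lemma al_cancel {lam : ℝ} {c : ℝ} (hc : c ≠ 0) {z : MvPolynomial (Fin 3) ℝ ⧸ Jdl lam}
    (hz : al lam c * z = 0) : z = 0 := by
  have h := congrArg (fun t => al lam c⁻¹ * t) hz
  simp only [mul_zero] at h
  rw [← mul_assoc, al_mul_al, inv_mul_cancel₀ hc] at h
  simpa [al] using h

variable {lam}
variable (hl : lam ^ 3 ≠ 1)

include hl in
lemma cancel13 {z : MvPolynomial (Fin 3) ℝ ⧸ Jdl lam} (hz : (1 - al lam lam ^ 3) * z = 0) :
    z = 0 := by
  have hne : (1 - lam ^ 3) ≠ 0 := sub_ne_zero.mpr (Ne.symm hl)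
  refine al_cancel hne ?_
  have e : al lam (1 - lam ^ 3) = 1 - al lam lam ^ 3 := by
    simp [al, map_sub, map_one, map_pow]
  rw [e]; exact hz

include hl in
lemma z01 : qq lam 0 ^ 2 * qq lam 1 = 0 := by
  have h0 := rel0 lam; have h1 := rel1 lam; have h2 := rel2 lam
  refine cancel13 hl ?_
  linear_combination qq lam 1 * h0 + al lam lam * qq lam 2 * h1 + al lam lam ^ 2 * qq lam 0 * h2

include hl in
lemma z02 : qq lam 0 ^ 2 * qq lam 2 = 0 := by
  have h0 := rel0 lam; have h1 := rel1 lam; have h2 := rel2 lam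
  refine cancel13 hl ?_
  linear_combination qq lam 2 * h0 + al lam lam * qq lam 1 * h2 + al lam lam ^ 2 * qq lam 0 * h1

include hl in
lemma z10 : qq lam 1 ^ 2 * qq lam 0 = 0 := by
  have h0 := rel0 lam; have h1 := rel1 lam; have h2 := rel2 lam
  refine cancel13 hl ?_
  linear_combination qq lam 0 * h1 + al lam lam * qq lam 2 * h0 + al lam lam ^ 2 * qq lam 1 * h2

include hl in
lemma z12 : qq lam 1 ^ 2 * qq lam 2 = 0 := by
  have h0 := rel0 lam; have h1 := rel1 lam; have h2 := rel2 lam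
  refine cancel13 hl ?_
  linear_combination qq lam 2 * h1 + al lam lam * qq lam 0 * h2 + al lam lam ^ 2 * qq lam 1 * h0

include hl in
lemma z20 : qq lam 2 ^ 2 * qq lam 0 = 0 := by
  have h0 := rel0 lam; have h1 := rel1 lam; have h2 := rel2 lam
  refine cancel13 hl ?_
  linear_combination qq lam 0 * h2 + al lam lam * qq lam 1 * h0 + al lam lam ^ 2 * qq lam 2 * h1

include hl in
lemma z21 : qq lam 2 ^ 2 * qq lam 1 = 0 := by
  have h0 := rel0 lam; have h1 := rel1 lam; have h2 := rel2 lam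
  refine cancel13 hl ?_
  linear_combination qq lam 1 * h2 + al lam lam * qq lam 0 * h1 + al lam lam ^ 2 * qq lam 2 * h0

lemma hwprod : ww lam = qq lam 0 * qq lam 1 * qq lam 2 := by
  simp [ww, qq, map_mul]

lemma psi_q (i : Fin 3) : Adl.psi lam (qq lam i) = Adl.gen lam i := by
  simp [qq, Adl.phi]

lemma psi_al (r : ℝ) : Adl.psi lam (al lam r) = algebraMap ℝ (Adl lam) r := by
  simp [al]

lemma psi_w : Adl.psi lam (ww lam) = ⟨0,0,0,0,0,0,0,1⟩ := by
  rw [hwprod, map_mul, map_mul, psi_q, psi_q, psi_q]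
  simp only [Adl.gen, Matrix.cons_val_zero, Matrix.cons_val_one, Matrix.head_cons,
    Matrix.cons_val_two, Matrix.tail_cons, Adl.mul_def]
  ext <;> norm_num

lemma ind {a b c : ℝ}
    (h : al lam a * qq lam 0 + al lam b * qq lam 1 + al lam c * qq lam 2 = 0) :
    a = 0 ∧ b = 0 ∧ c = 0 := by
  have H := congrArg (Adl.psi lam) h
  rw [map_add, map_add, map_mul, map_mul, map_mul, psi_q, psi_q, psi_q, psi_al, psi_al, psi_al,
    map_zero] at H
  simp only [Adl.gen, Matrix.cons_val_zero, Matrix.cons_val_one, Matrix.head_cons,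
    Matrix.cons_val_two, Matrix.tail_cons, Adl.algebraMap_apply, Adl.mul_def, Adl.add_def,
    Adl.zero_def, Adl.mk.injEq] at H
  refine ⟨?_, ?_, ?_⟩ <;> [skip; skip; skip] <;> nlinarith [H.2.1, H.2.2.1, H.2.2.2.1]

lemma wne : ww lam ≠ 0 := by
  intro h
  have H := congrArg (Adl.psi lam) h
  rw [psi_w, map_zero] at H
  simp only [Adl.zero_def, Adl.mk.injEq] at H
  exact one_ne_zero H.2.2.2.2.2.2.2

lemma wkill {r : ℝ} (h : al lam r * ww lam = 0) : r = 0 := by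
  have H := congrArg (Adl.psi lam) h
  rw [map_mul, psi_al, psi_w, map_zero] at H
  simp only [Adl.algebraMap_apply, Adl.mul_def, Adl.zero_def, Adl.mk.injEq] at H
  nlinarith [H.2.2.2.2.2.2.2]

lemma scal (mu x y z : ℝ) :
    al lam mu * (al lam x ^ 3 + al lam y ^ 3 + al lam z ^ 3)
        + 6 * (al lam x * al lam y * al lam z)
      = al lam (mu * (x ^ 3 + y ^ 3 + z ^ 3) + 6 * (x * y * z)) := by
  simp only [al, map_add, map_mul, map_pow, map_ofNat]

lemma mem_span_triple {V : Type*} [AddCommGroup V] [Module ℝ V] {x a b c : V}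
    (h : x ∈ Submodule.span ℝ ({a, b, c} : Set V)) :
    ∃ r s t : ℝ, x = r • a + (s • b + t • c) := by
  rcases Submodule.mem_span_insert.mp h with ⟨r, z, hz, rfl⟩
  rcases Submodule.mem_span_insert.mp hz with ⟨s, z2, hz2, rfl⟩
  rcases Submodule.mem_span_singleton.mp hz2 with ⟨t, rfl⟩
  exact ⟨r, s, t, rfl⟩

include hl in
lemma cube (A B C : MvPolynomial (Fin 3) ℝ ⧸ Jdl lam) :
    (A * qq lam 0 + B * qq lam 1 + C * qq lam 2) ^ 3
      = (al lam lam * (A ^ 3 + B ^ 3 + C ^ 3) + 6 * (A * B * C)) * ww lam :=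
  abs_cube lam (qq lam 0) (qq lam 1) (qq lam 2) (ww lam)
    (rel0 lam) (rel1 lam) (rel2 lam) (hwprod) hl A B C

include hl in
lemma finiteQ : Module.Finite ℝ (MvPolynomial (Fin 3) ℝ ⧸ Jdl lam) := by
  have hmul := abs_mulq lam (qq lam 0) (qq lam 1) (qq lam 2) (ww lam)
    (rel0 lam) (rel1 lam) (rel2 lam) (hwprod) hl
  set T : Set (MvPolynomial (Fin 3) ℝ ⧸ Jdl lam) :=
    {1, qq lam 0, qq lam 1, qq lam 2, qq lam 1 * qq lam 2, qq lam 0 * qq lam 2,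
      qq lam 0 * qq lam 1, ww lam} with hT
  have htop : Submodule.span ℝ T = ⊤ := by
    rw [eq_top_iff]
    rintro z -
    obtain ⟨p, rfl⟩ := Ideal.Quotient.mk_surjective z
    induction p using MvPolynomial.induction_on with
    | C a =>
      have e : Ideal.Quotient.mk (Jdl lam) (MvPolynomial.C a) = a • (1 : MvPolynomial (Fin 3) ℝ ⧸ Jdl lam) := by
        rw [Algebra.smul_def (A := MvPolynomial (Fin 3) ℝ ⧸ Jdl lam) a
          (1 : MvPolynomial (Fin 3) ℝ ⧸ Jdl lam), mul_one]
        rfl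
      rw [e]
      exact Submodule.smul_mem _ _ (Submodule.subset_span (by left; rfl))
    | add p q hp hq => rw [map_add]; exact Submodule.add_mem _ hp hq
    | mul_X p i hp =>
      rw [map_mul]
      have hx : Ideal.Quotient.mk (Jdl lam) (MvPolynomial.X i) = qq lam i := rfl
      rw [hx]
      refine hmul _ hp _ ?_
      fin_cases i
      · left; rfl
      · right; left; rfl
      · right; right; rfl
  rw [Module.finite_def, Submodule.fg_def]
  refine ⟨T, ?_, htop⟩
  rw [hT]
  apply Set.Finite.insert; apply Set.Finite.insert; apply Set.Finite.insert
  apply Set.Finite.insert; apply Set.Finite.insert; apply Set.Finite.insert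
  apply Set.Finite.insert; exact Set.finite_singleton _


end Quot

noncomputable section KeyDefs

/-- p(v) = v₀³+v₁³+v₂³ -/
def p3 (v : Fin 3 → ℝ) : ℝ := (v 0)^3 + (v 1)^3 + (v 2)^3
/-- q(v) = v₀v₁v₂ -/
def q3 (v : Fin 3 → ℝ) : ℝ := v 0 * v 1 * v 2
/-- Hesse cubic -/
def fH (μ : ℝ) (v : Fin 3 → ℝ) : ℝ := μ * p3 v + 6 * q3 v
/-- full polarization, normalized so that `TT μ v v v = fH μ v` -/
def TT (μ : ℝ) (u v w : Fin 3 → ℝ) : ℝ :=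
  μ * (u 0 * v 0 * w 0 + u 1 * v 1 * w 1 + u 2 * v 2 * w 2)
    + (u 0 * v 1 * w 2 + u 0 * v 2 * w 1 + u 1 * v 0 * w 2
        + u 1 * v 2 * w 0 + u 2 * v 0 * w 1 + u 2 * v 1 * w 0)
/-- polarization matrix of the form γ·p + (δ/?)… pattern -/
def AM (γ δ : ℝ) (v : Fin 3 → ℝ) : Matrix (Fin 3) (Fin 3) ℝ :=
  !![γ * v 0, δ * v 2, δ * v 1; δ * v 2, γ * v 1, δ * v 0; δ * v 1, δ * v 0, γ * v 2]

lemma polar (μ : ℝ) (u v w : Fin 3 → ℝ) :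
    TT μ u v w = (1/6) * (fH μ (u + v + w) - fH μ (u + v) - fH μ (u + w) - fH μ (v + w)
      + fH μ u + fH μ v + fH μ w) := by
  simp only [TT, fH, p3, q3, Pi.add_apply]
  ring

lemma detAM (γ δ : ℝ) (v : Fin 3 → ℝ) :
    (AM γ δ v).det = (γ^3 + 2*δ^3) * q3 v - γ * δ^2 * p3 v := by
  simp [AM, Matrix.det_fin_three, p3, q3]
  ring

end KeyDefs

section Key

variable {lam lam' : ℝ} {M : Matrix (Fin 3) (Fin 3) ℝ} {κ : ℝ}

set_option maxHeartbeats 2000000 in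
lemma key_lemma (hlam : 3 ≤ lam) (hlam' : 3 ≤ lam')
    (hd : M.det ≠ 0) (hκ : κ ≠ 0)
    (hF : ∀ v : Fin 3 → ℝ, fH lam' (Matrix.vecMul v M) = κ * fH lam v) :
    lam = lam' := by
  have vm : ∀ (v : Fin 3 → ℝ) (j : Fin 3),
      Matrix.vecMul v M j = v 0 * M 0 j + v 1 * M 1 j + v 2 * M 2 j := by
    intro v j
    simp [Matrix.vecMul, dotProduct, Fin.sum_univ_three]
  -- polarized version of hF
  have hT : ∀ u v w : Fin 3 → ℝ,
      TT lam' (Matrix.vecMul u M) (Matrix.vecMul v M) (Matrix.vecMul w M)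
        = κ * TT lam u v w := by
    intro u v w
    rw [polar, polar]
    rw [← Matrix.add_vecMul, ← Matrix.add_vecMul, ← Matrix.add_vecMul, ← Matrix.add_vecMul]
    rw [hF, hF, hF, hF, hF, hF, hF]
    ring
  have hMeq : ∀ w : Fin 3 → ℝ,
      M * AM lam' 1 (Matrix.vecMul w M) * M.transpose = κ • AM lam 1 w := by
    intro w
    ext i j
    fin_cases i <;> fin_cases j
    · have t := hT w ![(1:ℝ),0,0] ![(1:ℝ),0,0]
      simp [TT, vm] at t
      simp [Matrix.mul_apply, Fin.sum_univ_three, AM, Matrix.transpose_apply,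
        Matrix.smul_apply, vm, smul_eq_mul]
      linear_combination t
    · have t := hT w ![(1:ℝ),0,0] ![(0:ℝ),1,0]
      simp [TT, vm] at t
      simp [Matrix.mul_apply, Fin.sum_univ_three, AM, Matrix.transpose_apply,
        Matrix.smul_apply, vm, smul_eq_mul]
      linear_combination t
    · have t := hT w ![(1:ℝ),0,0] ![(0:ℝ),0,1]
      simp [TT, vm] at t
      simp [Matrix.mul_apply, Fin.sum_univ_three, AM, Matrix.transpose_apply,
        Matrix.smul_apply, vm, smul_eq_mul]
      linear_combination t
    · have t := hT w ![(0:ℝ),1,0] ![(1:ℝ),0,0]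
      simp [TT, vm] at t
      simp [Matrix.mul_apply, Fin.sum_univ_three, AM, Matrix.transpose_apply,
        Matrix.smul_apply, vm, smul_eq_mul]
      linear_combination t
    · have t := hT w ![(0:ℝ),1,0] ![(0:ℝ),1,0]
      simp [TT, vm] at t
      simp [Matrix.mul_apply, Fin.sum_univ_three, AM, Matrix.transpose_apply,
        Matrix.smul_apply, vm, smul_eq_mul]
      linear_combination t
    · have t := hT w ![(0:ℝ),1,0] ![(0:ℝ),0,1]
      simp [TT, vm] at t
      simp [Matrix.mul_apply, Fin.sum_univ_three, AM, Matrix.transpose_apply,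
        Matrix.smul_apply, vm, smul_eq_mul]
      linear_combination t
    · have t := hT w ![(0:ℝ),0,1] ![(1:ℝ),0,0]
      simp [TT, vm] at t
      simp [Matrix.mul_apply, Fin.sum_univ_three, AM, Matrix.transpose_apply,
        Matrix.smul_apply, vm, smul_eq_mul]
      linear_combination t
    · have t := hT w ![(0:ℝ),0,1] ![(0:ℝ),1,0]
      simp [TT, vm] at t
      simp [Matrix.mul_apply, Fin.sum_univ_three, AM, Matrix.transpose_apply,
        Matrix.smul_apply, vm, smul_eq_mul]
      linear_combination t
    · have t := hT w ![(0:ℝ),0,1] ![(0:ℝ),0,1]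
      simp [TT, vm] at t
      simp [Matrix.mul_apply, Fin.sum_univ_three, AM, Matrix.transpose_apply,
        Matrix.smul_apply, vm, smul_eq_mul]
      linear_combination t
  -- determinant consequence of hMeq
  have detM3 : ∀ w : Fin 3 → ℝ,
      M.det ^ 2 * ((lam'^3 + 2) * q3 (Matrix.vecMul w M) - lam' * p3 (Matrix.vecMul w M))
        = κ ^ 3 * ((lam ^ 3 + 2) * q3 w - lam * p3 w) := by
    intro w
    have h := congrArg Matrix.det (hMeq w)
    rw [Matrix.det_mul, Matrix.det_mul, Matrix.det_transpose, Matrix.det_smul,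
      detAM, detAM] at h
    simp only [Fintype.card_fin] at h
    linear_combination h
  have hd2 : M.det ^ 2 ≠ 0 := pow_ne_zero _ hd
  have hd2pos : 0 < M.det ^ 2 := by positivity
  have hl27 : (27:ℝ) ≤ lam' ^ 3 := by nlinarith [sq_nonneg lam', sq_nonneg (lam' - 3), sq_nonneg (lam' + 3)]
  have h8pos : (0:ℝ) < lam' ^ 3 + 8 := by linarith
  have h8 : (lam' ^ 3 + 8) ≠ 0 := ne_of_gt h8pos
  set γ : ℝ := (κ * M.det ^ 2 - κ ^ 3) * lam / ((lam' ^ 3 + 8) * M.det ^ 2) with hγ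
  set δ : ℝ := (6 * κ * M.det ^ 2 + κ ^ 3 * (lam ^ 3 + 2)) / ((lam' ^ 3 + 8) * M.det ^ 2) with hδ
  have hQ : ∀ w : Fin 3 → ℝ, q3 (Matrix.vecMul w M) = γ * p3 w + δ * q3 w := by
    intro w
    have e1 := hF w
    simp only [fH] at e1
    have e2 := detM3 w
    rw [hγ, hδ]
    field_simp
    linear_combination (M.det ^ 2 * e1 + e2)
  -- polarization of q3 ∘ M
  have hTq : ∀ u v w : Fin 3 → ℝ,
      TT 0 (Matrix.vecMul u M) (Matrix.vecMul v M) (Matrix.vecMul w M)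
        = (6*γ) * (u 0 * v 0 * w 0 + u 1 * v 1 * w 1 + u 2 * v 2 * w 2) + δ * TT 0 u v w := by
    intro u v w
    rw [polar, polar]
    rw [← Matrix.add_vecMul, ← Matrix.add_vecMul, ← Matrix.add_vecMul, ← Matrix.add_vecMul]
    simp only [fH, zero_mul, zero_add]
    rw [hQ, hQ, hQ, hQ, hQ, hQ, hQ]
    simp only [p3, q3, Pi.add_apply]
    ring
  have hMq : ∀ w : Fin 3 → ℝ,
      M * AM 0 1 (Matrix.vecMul w M) * M.transpose = AM (6*γ) δ w := by
    intro w
    ext i j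
    fin_cases i <;> fin_cases j
    · have t := hTq w ![(1:ℝ),0,0] ![(1:ℝ),0,0]
      simp [TT, vm] at t
      simp [Matrix.mul_apply, Fin.sum_univ_three, AM, Matrix.transpose_apply,
        Matrix.smul_apply, vm, smul_eq_mul]
      linear_combination t
    · have t := hTq w ![(1:ℝ),0,0] ![(0:ℝ),1,0]
      simp [TT, vm] at t
      simp [Matrix.mul_apply, Fin.sum_univ_three, AM, Matrix.transpose_apply,
        Matrix.smul_apply, vm, smul_eq_mul]
      linear_combination t
    · have t := hTq w ![(1:ℝ),0,0] ![(0:ℝ),0,1]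
      simp [TT, vm] at t
      simp [Matrix.mul_apply, Fin.sum_univ_three, AM, Matrix.transpose_apply,
        Matrix.smul_apply, vm, smul_eq_mul]
      linear_combination t
    · have t := hTq w ![(0:ℝ),1,0] ![(1:ℝ),0,0]
      simp [TT, vm] at t
      simp [Matrix.mul_apply, Fin.sum_univ_three, AM, Matrix.transpose_apply,
        Matrix.smul_apply, vm, smul_eq_mul]
      linear_combination t
    · have t := hTq w ![(0:ℝ),1,0] ![(0:ℝ),1,0]
      simp [TT, vm] at t
      simp [Matrix.mul_apply, Fin.sum_univ_three, AM, Matrix.transpose_apply,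
        Matrix.smul_apply, vm, smul_eq_mul]
      linear_combination t
    · have t := hTq w ![(0:ℝ),1,0] ![(0:ℝ),0,1]
      simp [TT, vm] at t
      simp [Matrix.mul_apply, Fin.sum_univ_three, AM, Matrix.transpose_apply,
        Matrix.smul_apply, vm, smul_eq_mul]
      linear_combination t
    · have t := hTq w ![(0:ℝ),0,1] ![(1:ℝ),0,0]
      simp [TT, vm] at t
      simp [Matrix.mul_apply, Fin.sum_univ_three, AM, Matrix.transpose_apply,
        Matrix.smul_apply, vm, smul_eq_mul]
      linear_combination t
    · have t := hTq w ![(0:ℝ),0,1] ![(0:ℝ),1,0]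
      simp [TT, vm] at t
      simp [Matrix.mul_apply, Fin.sum_univ_three, AM, Matrix.transpose_apply,
        Matrix.smul_apply, vm, smul_eq_mul]
      linear_combination t
    · have t := hTq w ![(0:ℝ),0,1] ![(0:ℝ),0,1]
      simp [TT, vm] at t
      simp [Matrix.mul_apply, Fin.sum_univ_three, AM, Matrix.transpose_apply,
        Matrix.smul_apply, vm, smul_eq_mul]
      linear_combination t
  have hD : ∀ w : Fin 3 → ℝ,
      M.det ^ 2 * (2 * q3 (Matrix.vecMul w M))
        = ((6*γ)^3 + 2*δ^3) * q3 w - (6*γ) * δ^2 * p3 w := by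
    intro w
    have h := congrArg Matrix.det (hMq w)
    rw [Matrix.det_mul, Matrix.det_mul, Matrix.det_transpose, detAM, detAM] at h
    linear_combination h
  -- evaluate
  have ev1 := hD ![1,0,0]
  have ev2 := hD ![1,1,1]
  rw [hQ] at ev1 ev2
  have hp1 : p3 ![(1:ℝ),0,0] = 1 := by simp [p3]
  have hq1 : q3 ![(1:ℝ),0,0] = 0 := by simp [q3]
  have hp2 : p3 ![(1:ℝ),1,1] = 3 := by norm_num [p3, Matrix.cons_val_two, Matrix.tail_cons, Matrix.head_cons]
  have hq2 : q3 ![(1:ℝ),1,1] = 1 := by norm_num [q3, Matrix.cons_val_two, Matrix.tail_cons, Matrix.head_cons]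
  rw [hp1, hq1] at ev1
  rw [hp2, hq2] at ev2
  -- γ = 0
  have hγ0 : γ = 0 := by
    have h' : γ * (2 * M.det ^ 2 + 6 * δ ^ 2) = 0 := by linear_combination ev1
    have hpos : 0 < 2 * M.det ^ 2 + 6 * δ ^ 2 := by positivity
    exact (mul_eq_zero.mp h').resolve_right (ne_of_gt hpos)
  rw [hγ0] at ev2 hQ
  -- δ ≠ 0
  have hMdetUnit : IsUnit M.det := isUnit_iff_ne_zero.mpr hd
  have hw0 : Matrix.vecMul (Matrix.vecMul ![1,1,1] M⁻¹) M = ![1,1,1] := by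
    rw [Matrix.vecMul_vecMul, Matrix.nonsing_inv_mul _ hMdetUnit, Matrix.vecMul_one]
  have hδ0 : δ ≠ 0 := by
    intro h0
    have := hQ (Matrix.vecMul ![1,1,1] M⁻¹)
    rw [hw0, h0, hq2] at this
    simp at this
  have hδ2 : δ ^ 2 = M.det ^ 2 := by
    have : 2 * M.det ^ 2 * δ = 2 * δ ^ 3 := by linear_combination ev2
    have h3 : δ * (M.det ^ 2 - δ ^ 2) = 0 := by linear_combination this / 2
    rcases mul_eq_zero.mp h3 with h | h
    · exact absurd h hδ0
    · linarith [sub_eq_zero.mp h]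
  -- numerator of γ vanishes
  have hnum : (κ * M.det ^ 2 - κ ^ 3) * lam = 0 := by
    have := hγ0
    rw [hγ] at this
    exact (div_eq_zero_iff.mp this).resolve_right (mul_ne_zero h8 hd2)
  have hlam0 : lam ≠ 0 := by linarith
  have hκd : M.det ^ 2 = κ ^ 2 := by
    have h := (mul_eq_zero.mp hnum).resolve_right hlam0
    have : κ * (M.det ^ 2 - κ ^ 2) = 0 := by linear_combination h
    rcases mul_eq_zero.mp this with h' | h'
    · exact absurd h' hκ
    · linarith [sub_eq_zero.mp h']
  -- conclude
  have hδval : δ * ((lam' ^ 3 + 8) * M.det ^ 2) = 6 * κ * M.det ^ 2 + κ ^ 3 * (lam ^ 3 + 2) := by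
    rw [hδ]
    field_simp
  have final : κ ^ 2 * (lam ^ 3 + 8) ^ 2 = κ ^ 2 * (lam' ^ 3 + 8) ^ 2 := by
    have hδκ : δ * (lam' ^ 3 + 8) = κ * (lam ^ 3 + 8) := by
      have hκ2 : κ ^ 2 ≠ 0 := pow_ne_zero _ hκ
      apply mul_left_cancel₀ hκ2
      calc κ ^ 2 * (δ * (lam' ^ 3 + 8)) = δ * ((lam' ^ 3 + 8) * M.det ^ 2) := by
            rw [hκd]; ring
        _ = 6 * κ * M.det ^ 2 + κ ^ 3 * (lam ^ 3 + 2) := hδval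
        _ = κ ^ 2 * (κ * (lam ^ 3 + 8)) := by rw [hκd]; ring
    have := congrArg (fun t => t ^ 2) hδκ
    calc κ ^ 2 * (lam ^ 3 + 8) ^ 2 = (κ * (lam ^ 3 + 8)) ^ 2 := by ring
      _ = (δ * (lam' ^ 3 + 8)) ^ 2 := this.symm
      _ = δ ^ 2 * (lam' ^ 3 + 8) ^ 2 := by ring
      _ = κ ^ 2 * (lam' ^ 3 + 8) ^ 2 := by rw [hδ2, hκd]
  have hsq : (lam ^ 3 + 8) ^ 2 = (lam' ^ 3 + 8) ^ 2 :=
    mul_left_cancel₀ (pow_ne_zero 2 hκ) final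
  have hcube : lam ^ 3 = lam' ^ 3 := by
    have h0 : (lam ^ 3 + 8 - (lam' ^ 3 + 8)) * (lam ^ 3 + 8 + (lam' ^ 3 + 8)) = 0 := by
      linear_combination hsq
    have hl27' : (27:ℝ) ≤ lam ^ 3 := by
      nlinarith [sq_nonneg lam, sq_nonneg (lam - 3), sq_nonneg (lam + 3)]
    rcases mul_eq_zero.mp h0 with h | h
    · linarith
    · nlinarith
  have hfac : (lam - lam') * (lam ^ 2 + lam * lam' + lam' ^ 2) = 0 := by
    linear_combination hcube
  have hpos2 : 0 < lam ^ 2 + lam * lam' + lam' ^ 2 := by nlinarith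
  have := (mul_eq_zero.mp hfac).resolve_right (ne_of_gt hpos2)
  linarith

end Key

section Assembly

set_option maxHeartbeats 2000000 in
set_option synthInstance.maxHeartbeats 400000 in
/-- There are infinitely many pairwise non-isomorphic (as graded ℝ-algebras)
finite-dimensional algebras `ℝ[x₁,x₂,x₃]/(x₁²−λx₂x₃, x₂²−λx₁x₃, x₃²−λx₁x₂)` with
`λ ≠ 1`: outside a finite exceptional set, distinct parameters give algebras
admitting no algebra isomorphism preserving the degree-2 part. -/
theorem stmt_19 :
    ∃ L : Set ℝ, L.Infinite ∧ (1 : ℝ) ∉ L ∧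
      (∀ lam ∈ L, FiniteDimensional ℝ (MvPolynomial (Fin 3) ℝ ⧸ Jdl lam)) ∧
      ∀ lam ∈ L, ∀ lam' ∈ L, lam ≠ lam' →
        ¬ ∃ e : (MvPolynomial (Fin 3) ℝ ⧸ Jdl lam) ≃ₐ[ℝ]
              (MvPolynomial (Fin 3) ℝ ⧸ Jdl lam'),
            ∀ p ∈ degTwo lam, e p ∈ degTwo lam' := by
  have cube27 : ∀ x : ℝ, 3 ≤ x → (27:ℝ) ≤ x ^ 3 := by
    intro x hx
    nlinarith [sq_nonneg x, sq_nonneg (x - 3), sq_nonneg (x + 3)]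
  refine ⟨Set.Ici 3, Set.Ici_infinite 3, by norm_num, ?_, ?_⟩
  · intro lam hlam
    have hl : lam ^ 3 ≠ 1 := by have := cube27 lam hlam; intro h; rw [h] at this; linarith
    exact finiteQ hl
  · intro lam hlam lam' hlam' hne ⟨e, he⟩
    have h3 : (3:ℝ) ≤ lam := hlam
    have h3' : (3:ℝ) ≤ lam' := hlam'
    have hl : lam ^ 3 ≠ 1 := by have := cube27 lam h3; intro h; rw [h] at this; linarith
    have hl' : lam' ^ 3 ≠ 1 := by have := cube27 lam' h3'; intro h; rw [h] at this; linarith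
    have hlam0 : lam ≠ 0 := by linarith
    -- coordinates of e on generators
    have sm : ∀ (r : ℝ) (z : MvPolynomial (Fin 3) ℝ ⧸ Jdl lam'), r • z = al lam' r * z :=
      fun r z => Algebra.smul_def (A := MvPolynomial (Fin 3) ℝ ⧸ Jdl lam') r z
    have h0mem : qq lam 0 ∈ degTwo lam := Submodule.subset_span (by left; rfl)
    have h1mem : qq lam 1 ∈ degTwo lam := Submodule.subset_span (by right; left; rfl)
    have h2mem : qq lam 2 ∈ degTwo lam := Submodule.subset_span (by right; right; rfl)
    obtain ⟨m00, m01, m02, hm0⟩ := mem_span_triple (he _ h0mem)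
    obtain ⟨m10, m11, m12, hm1⟩ := mem_span_triple (he _ h1mem)
    obtain ⟨m20, m21, m22, hm2⟩ := mem_span_triple (he _ h2mem)
    rw [sm, sm, sm] at hm0 hm1 hm2
    have e_al : ∀ r : ℝ, e (al lam r) = al lam' r := fun r => e.commutes r
    -- combination formula
    have ecomb : ∀ a b c : ℝ,
        e (al lam a * qq lam 0 + al lam b * qq lam 1 + al lam c * qq lam 2)
          = al lam' (a*m00 + b*m10 + c*m20) * qq lam' 0
            + al lam' (a*m01 + b*m11 + c*m21) * qq lam' 1
            + al lam' (a*m02 + b*m12 + c*m22) * qq lam' 2 := by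
      intro a b c
      rw [map_add, map_add, map_mul, map_mul, map_mul, e_al, e_al, e_al, hm0, hm1, hm2]
      have ha : ∀ r s : ℝ, al lam' (r + s) = al lam' r + al lam' s := fun r s => map_add _ r s
      have hm : ∀ r s : ℝ, al lam' (r * s) = al lam' r * al lam' s := fun r s => map_mul _ r s
      simp only [ha, hm, qq]
      ring
    -- cube relation transferred
    have keyrel : ∀ a b c : ℝ,
        al lam' (lam * (a^3 + b^3 + c^3) + 6 * (a*b*c)) * e (ww lam)
          = al lam' (lam' * ((a*m00 + b*m10 + c*m20)^3 + (a*m01 + b*m11 + c*m21)^3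
                + (a*m02 + b*m12 + c*m22)^3)
              + 6 * ((a*m00 + b*m10 + c*m20) * (a*m01 + b*m11 + c*m21)
                * (a*m02 + b*m12 + c*m22))) * ww lam' := by
      intro a b c
      have lhs1 : al lam' (lam * (a^3+b^3+c^3) + 6*(a*b*c)) * e (ww lam)
          = e ((al lam a * qq lam 0 + al lam b * qq lam 1 + al lam c * qq lam 2) ^ 3) := by
        rw [cube hl, scal, map_mul, e_al]
      rw [lhs1, map_pow, ecomb, cube hl', scal]
    -- κ
    set κ : ℝ := lam⁻¹ * (lam' * (m00^3 + m01^3 + m02^3) + 6 * (m00 * m01 * m02)) with hκdef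
    have hew : e (ww lam) = al lam' κ * ww lam' := by
      have h100 := keyrel 1 0 0
      norm_num at h100
      have := congrArg (fun t => al lam' lam⁻¹ * t) h100
      rw [← mul_assoc, ← mul_assoc, al_mul_al, al_mul_al, inv_mul_cancel₀ hlam0] at this
      simpa [al, hκdef] using this
    -- scalar identity
    have hscal : ∀ a b c : ℝ,
        lam' * ((a*m00 + b*m10 + c*m20)^3 + (a*m01 + b*m11 + c*m21)^3
            + (a*m02 + b*m12 + c*m22)^3)
          + 6 * ((a*m00 + b*m10 + c*m20) * (a*m01 + b*m11 + c*m21) * (a*m02 + b*m12 + c*m22))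
        = κ * (lam * (a^3 + b^3 + c^3) + 6 * (a*b*c)) := by
      intro a b c
      have h1 := keyrel a b c
      rw [hew, ← mul_assoc, al_mul_al] at h1
      have hz : al lam' ((lam * (a^3+b^3+c^3) + 6*(a*b*c)) * κ
          - (lam' * ((a*m00 + b*m10 + c*m20)^3 + (a*m01 + b*m11 + c*m21)^3
                + (a*m02 + b*m12 + c*m22)^3)
              + 6 * ((a*m00 + b*m10 + c*m20) * (a*m01 + b*m11 + c*m21)
                * (a*m02 + b*m12 + c*m22)))) * ww lam' = 0 := by
        have hsub : ∀ r s : ℝ, al lam' (r - s) = al lam' r - al lam' s :=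
          fun r s => map_sub _ r s
        rw [hsub, sub_mul, h1, sub_self]
      have := wkill hz
      linarith [this]
    -- the matrix
    set M : Matrix (Fin 3) (Fin 3) ℝ := !![m00, m01, m02; m10, m11, m12; m20, m21, m22] with hM
    have hvm : ∀ (v : Fin 3 → ℝ) (j : Fin 3), Matrix.vecMul v M j
        = v 0 * M 0 j + v 1 * M 1 j + v 2 * M 2 j := by
      intro v j
      simp [Matrix.vecMul, dotProduct, Fin.sum_univ_three]
    have hF : ∀ v : Fin 3 → ℝ, fH lam' (Matrix.vecMul v M) = κ * fH lam v := by
      intro v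
      have h := hscal (v 0) (v 1) (v 2)
      simp only [fH, p3, q3, hvm, hM]
      norm_num [Matrix.cons_val_zero, Matrix.cons_val_one, Matrix.head_cons, Matrix.cons_val_two,
        Matrix.tail_cons, Matrix.vecHead, Matrix.vecTail, Fin.succ_zero_eq_one, Fin.succ_one_eq_two]
      linarith [h]
    -- κ ≠ 0
    have hκ0 : κ ≠ 0 := by
      intro h0
      have : e (ww lam) = 0 := by rw [hew, h0]; simp [al]
      have hww : ww lam = 0 := e.injective (by rw [map_zero]; exact this)
      exact wne hww
    -- det M ≠ 0
    have hdet : M.det ≠ 0 := by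
      intro h0
      obtain ⟨v, hv0, hvM⟩ := Matrix.exists_vecMul_eq_zero_iff.mpr h0
      have hc := ecomb (v 0) (v 1) (v 2)
      have hz0 : ∀ j : Fin 3, Matrix.vecMul v M j = 0 := by
        intro j; rw [hvM]; rfl
      have e00 : v 0 * m00 + v 1 * m10 + v 2 * m20 = 0 := by
        have h := hz0 0; rw [hvm] at h; simpa [hM] using h
      have e01 : v 0 * m01 + v 1 * m11 + v 2 * m21 = 0 := by
        have h := hz0 1; rw [hvm] at h; simpa [hM] using h
      have e02 : v 0 * m02 + v 1 * m12 + v 2 * m22 = 0 := by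
        have h := hz0 2; rw [hvm] at h; simpa [hM] using h
      rw [e00, e01, e02] at hc
      have hal0 : al lam' (0:ℝ) = 0 := map_zero _
      simp only [hal0, zero_mul, add_zero, zero_add] at hc
      have hzz : al lam (v 0) * qq lam 0 + al lam (v 1) * qq lam 1 + al lam (v 2) * qq lam 2
          = 0 := e.injective (by rw [map_zero]; exact hc)
      obtain ⟨hv1, hv2, hv3⟩ := ind hzz
      apply hv0
      funext i
      fin_cases i <;> assumption
    exact hne (key_lemma h3 h3' hdet hκ0 hF)

end Assembly
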